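/- Let p be a prime, a ≥ 1, and n = p^a. If c : Fin n → ℤ satisfies c 0 + c 1 + ⋯ + c (n−1) = 1, then for every r : Fin n → ℚ the linear system (circulant c) · x = r has a unique solution x : Fin n → ℚ; equivalently, the circulant matrix of c is invertible as a matrix over ℚ. -/

import Mathlib

open Matrix Polynomial
open Fin.NatCast

section Aux

variable {K : Type*} [CommRing K]

lemma shift_pow (n : ℕ) [NeZero n] (k : ℕ) :
    (Matrix.circulant (Pi.single (1 : Fin n) (1 : K))) ^ k =
      Matrix.circulant (Pi.single ((k : Fin n)) 1) := by
  induction k with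
  | zero => simp
  | succ k ih =>
    rw [pow_succ, ih, Matrix.circulant_mul]
    ext i
    simp only [Matrix.mulVec_single, Matrix.circulant_apply, mul_one]
    simp [Pi.single_apply, sub_eq_iff_eq_add, eq_comm (a := i), add_comm]

lemma circulant_sum_apply (n : ℕ) (s : Finset (Fin n)) (f : Fin n → Fin n → K) :
    Matrix.circulant (∑ k ∈ s, f k) = ∑ k ∈ s, Matrix.circulant (f k) := by
  ext i j
  simp [Matrix.circulant_apply, Matrix.sum_apply]

lemma circulant_eq_aeval (n : ℕ) [NeZero n] (v : Fin n → K) :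
    Matrix.circulant v =
      Polynomial.aeval (Matrix.circulant (Pi.single (1 : Fin n) (1 : K)))
        (∑ i : Fin n, Polynomial.C (v i) * Polynomial.X ^ (i : ℕ)) := by
  rw [map_sum]
  have : ∀ i : Fin n,
      Polynomial.aeval (Matrix.circulant (Pi.single (1 : Fin n) (1 : K)))
        (Polynomial.C (v i) * Polynomial.X ^ (i : ℕ)) =
      Matrix.circulant (Pi.single i (v i)) := by
    intro i
    rw [_root_.map_mul, Polynomial.aeval_C, Polynomial.aeval_X_pow, shift_pow,
      Fin.cast_val_eq_self, Algebra.algebraMap_eq_smul_one, smul_mul_assoc, one_mul,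
      ← Matrix.circulant_smul]
    congr 1
    ext j
    simp [Pi.single_apply]
  simp only [this]
  rw [← circulant_sum_apply]
  congr 1
  ext j
  simp [Pi.single_apply]

lemma circulant_isUnit {p a : ℕ} [Fact p.Prime] {n : ℕ} (hn : n = p ^ a)
    (v : Fin n → ZMod p) (hv : ∑ i, v i = 1) :
    IsUnit (Matrix.circulant v) := by
  have hp : p.Prime := Fact.out
  have hn0 : n ≠ 0 := by
    rw [hn]; exact pow_ne_zero _ hp.ne_zero
  have : NeZero n := ⟨hn0⟩
  set P : Matrix (Fin n) (Fin n) (ZMod p) :=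
    Matrix.circulant (Pi.single (1 : Fin n) (1 : ZMod p)) with hP
  set f : Polynomial (ZMod p) := ∑ i : Fin n, Polynomial.C (v i) * Polynomial.X ^ (i : ℕ)
    with hf
  have heval : f.eval 1 = 1 := by
    rw [hf]
    simp [Polynomial.eval_finset_sum, hv]
  have hdvd : (Polynomial.X - 1 : Polynomial (ZMod p)) ∣ f - 1 := by
    have h := Polynomial.X_sub_C_dvd_sub_C_eval (a := (1 : ZMod p)) (p := f)
    rwa [heval, Polynomial.C_1] at h
  obtain ⟨g, hg⟩ := hdvd
  have hPn : P ^ n = 1 := by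
    rw [hP, shift_pow]
    simp
  have hnil : IsNilpotent (Matrix.circulant v - 1) := by
    refine ⟨n, ?_⟩
    have h1 : Matrix.circulant v - 1 = Polynomial.aeval P (f - 1) := by
      rw [map_sub, _root_.map_one, ← circulant_eq_aeval]
    rw [h1, hg, ← _root_.map_pow, mul_pow]
    have hchar : (Polynomial.X - 1 : Polynomial (ZMod p)) ^ n
        = Polynomial.X ^ n - 1 := by
      rw [hn]
      have := sub_pow_char_pow (p := p) (n := a)
        (x := (Polynomial.X : Polynomial (ZMod p))) (y := 1)
      simpa using this
    rw [hchar, _root_.map_mul, map_sub, _root_.map_pow, _root_.map_one, Polynomial.aeval_X,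
      hPn, sub_self, zero_mul]
  have := hnil.isUnit_one_add
  rwa [add_sub_cancel] at this

end Aux

theorem circulant_system_unique_solution (p a : ℕ) (hp : p.Prime) (ha : 1 ≤ a)
    (n : ℕ) (hn : n = p ^ a)
    (c : Fin n → ℤ) (hc : ∑ i, c i = 1) :
    (∀ r : Fin n → ℚ, ∃! x : Fin n → ℚ,
      (Matrix.circulant fun i => (c i : ℚ)).mulVec x = r) ∧
    IsUnit (Matrix.circulant fun i => (c i : ℚ)) := by
  haveI : Fact p.Prime := ⟨hp⟩
  set v : Fin n → ZMod p := fun i => ((c i : ℤ) : ZMod p) with hv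
  have hvsum : ∑ i, v i = 1 := by
    rw [hv]
    push_cast
    rw [← Int.cast_sum, hc, Int.cast_one]
  have hUnitP : IsUnit (Matrix.circulant v) := circulant_isUnit hn v hvsum
  set d : ℤ := (Matrix.circulant c).det with hd
  have hdP : ((d : ZMod p)) = (Matrix.circulant v).det := by
    rw [hd, show (Matrix.circulant v) = (Int.castRingHom (ZMod p)).mapMatrix (Matrix.circulant c)
      from by ext i j; simp [Matrix.circulant_apply, hv, RingHom.mapMatrix_apply],
      ← RingHom.map_det]
    rfl
  have hdne : d ≠ 0 := by
    intro h0
    have : IsUnit ((d : ZMod p)) := by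
      rw [hdP]; exact (Matrix.isUnit_iff_isUnit_det _).mp hUnitP
    rw [h0] at this
    simp at this
  set A : Matrix (Fin n) (Fin n) ℚ := Matrix.circulant fun i => (c i : ℚ) with hA
  have hAdet : A.det = (d : ℚ) := by
    rw [hA, hd, show (Matrix.circulant fun i => (c i : ℚ))
        = (Int.castRingHom ℚ).mapMatrix (Matrix.circulant c)
      from by ext i j; simp [Matrix.circulant_apply, RingHom.mapMatrix_apply],
      ← RingHom.map_det]
    rfl
  have hAdetUnit : IsUnit A.det := by
    rw [hAdet, isUnit_iff_ne_zero]
    exact_mod_cast hdne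
  have hAUnit : IsUnit A := (Matrix.isUnit_iff_isUnit_det _).mpr hAdetUnit
  refine ⟨fun r => ⟨A⁻¹.mulVec r, ?_, ?_⟩, hAUnit⟩
  · show A.mulVec (A⁻¹.mulVec r) = r
    rw [Matrix.mulVec_mulVec, Matrix.mul_nonsing_inv _ hAdetUnit, Matrix.one_mulVec]
  · intro y hy
    have := congrArg (A⁻¹.mulVec) hy
    rwa [Matrix.mulVec_mulVec, Matrix.nonsing_inv_mul _ hAdetUnit, Matrix.one_mulVec] at this
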